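/- For every natural number κ, the function x ↦ (e^{x/2} − e^{−x/2}·e_{2κ}(x)) / x^κ is monotonically increasing on the interval (0, ∞). (Equivalently, the M-Whittaker function M_{κ,κ+1/2} is monotonically increasing on (0,∞); the paper uses the case κ = 5.) -/

import Mathlib

open Real Set

/-- `taylorExp j x = ∑_{n=0}^{j} x^n / n!`, the `j`-th order Taylor approximation of `e^x`. -/
noncomputable def taylorExp (j : ℕ) (x : ℝ) : ℝ :=
  ∑ n ∈ Finset.range (j + 1), x ^ n / n.factorial

lemma taylorExp_le_exp {x : ℝ} (hx : 0 ≤ x) (j : ℕ) : taylorExp j x ≤ Real.exp x :=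
  Real.sum_le_exp_of_nonneg hx (j + 1)

lemma hasDerivAt_taylorExp (j : ℕ) (x : ℝ) :
    HasDerivAt (taylorExp j) (taylorExp j x - x ^ j / j.factorial) x := by
  have h : HasDerivAt (taylorExp j)
      (∑ n ∈ Finset.range (j + 1), (n : ℝ) * x ^ (n - 1) / n.factorial) x := by
    apply HasDerivAt.fun_sum
    intro n _
    simpa [div_eq_mul_inv, mul_comm, mul_assoc, mul_left_comm] using
      ((hasDerivAt_pow n x).div_const (n.factorial : ℝ))
  convert h using 1
  rw [Finset.sum_range_succ' (fun n => (n : ℝ) * x ^ (n - 1) / n.factorial)]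
  simp only [Nat.cast_zero, zero_mul, zero_div, add_zero]
  have : ∀ k : ℕ, ((k : ℝ) + 1) * x ^ k / (k + 1).factorial = x ^ k / k.factorial := by
    intro k
    rw [Nat.factorial_succ]
    push_cast
    field_simp
  simp only [Nat.cast_add, Nat.cast_one, Nat.add_sub_cancel, this]
  have : taylorExp j x = (∑ n ∈ Finset.range j, x ^ n / n.factorial) + x ^ j / j.factorial := by
    rw [taylorExp, Finset.sum_range_succ]
  rw [this]; ring

/-- Tail bound for exp. -/
lemma exp_tail_le {x : ℝ} (hx : 0 < x) (M : ℕ) (hxM : x < M + 1) :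
    Real.exp x - ∑ n ∈ Finset.range M, x ^ n / n.factorial
      ≤ x ^ M / M.factorial * ((M + 1) / (M + 1 - x)) := by
  have hsum : Summable (fun n : ℕ => x ^ n / n.factorial) := Real.summable_pow_div_factorial x
  have hexp : Real.exp x = ∑' n : ℕ, x ^ n / n.factorial := by
    rw [Real.exp_eq_exp_ℝ, NormedSpace.exp_eq_tsum_div]
  have hsplit := Summable.sum_add_tsum_nat_add M hsum
  have htail : Real.exp x - ∑ n ∈ Finset.range M, x ^ n / n.factorial
      = ∑' n : ℕ, x ^ (n + M) / (n + M).factorial := by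
    rw [hexp, ← hsplit]; ring
  rw [htail]
  have hr0 : 0 ≤ x / (M + 1) := by positivity
  have hr1 : x / (M + 1) < 1 := by
    rw [div_lt_one (by positivity)]; exact hxM
  have hterm : ∀ n : ℕ, x ^ (n + M) / (n + M).factorial
      ≤ x ^ M / M.factorial * (x / (M + 1)) ^ n := by
    intro n
    have hfac : (M.factorial : ℝ) * (M + 1) ^ n ≤ ((M + n).factorial : ℝ) := by
      exact_mod_cast Nat.cast_le.mpr Nat.factorial_mul_pow_le_factorial
    rw [div_pow, pow_add, div_mul_div_comm, ← pow_add]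
    rw [div_le_div_iff₀ (by positivity) (by positivity)]
    have hMn : (M + n).factorial = (n + M).factorial := by rw [add_comm]
    calc x ^ (n + M) * (↑M.factorial * (↑M + 1) ^ n)
        ≤ x ^ (n + M) * ((M + n).factorial : ℝ) := by
          apply mul_le_mul_of_nonneg_left _ (by positivity)
          exact_mod_cast hfac
      _ = x ^ M * x ^ n * ((n + M).factorial : ℝ) := by rw [hMn, ← pow_add, add_comm n M]
  have hsum2 : Summable (fun n : ℕ => x ^ (n + M) / (n + M).factorial) :=
    (summable_nat_add_iff M).mpr hsum
  have hsum3 : Summable (fun n : ℕ => x ^ M / M.factorial * (x / (M + 1)) ^ n) :=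
    (summable_geometric_of_lt_one hr0 hr1).mul_left _
  calc ∑' n : ℕ, x ^ (n + M) / (n + M).factorial
      ≤ ∑' n : ℕ, x ^ M / M.factorial * (x / (M + 1)) ^ n := Summable.tsum_le_tsum hterm hsum2 hsum3
    _ = x ^ M / M.factorial * (1 - x / (M + 1))⁻¹ := by
        rw [tsum_mul_left, tsum_geometric_of_lt_one hr0 hr1]
    _ = x ^ M / M.factorial * ((M + 1) / (M + 1 - x)) := by
        congr 1
        rw [inv_eq_one_div]
        rw [div_eq_div_iff (by linarith) (by linarith)]
        field_simp

/-- The key inequality. -/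
lemma key_ineq (κ : ℕ) {x : ℝ} (hx : 0 < x) :
    0 ≤ (x / 2 - κ) * (Real.exp x - taylorExp (2 * κ) x)
        + x ^ (2 * κ + 1) / (2 * κ).factorial := by
  have hR : 0 ≤ Real.exp x - taylorExp (2 * κ) x :=
    sub_nonneg.mpr (taylorExp_le_exp hx.le _)
  rcases le_or_gt (2 * (κ : ℝ)) x with hcase | hcase
  · have h1 : 0 ≤ x / 2 - κ := by linarith
    positivity
  · -- x < 2κ, in particular κ ≥ 1
    have hk1 : 1 ≤ κ := by
      by_contra h
      push_neg at h
      interval_cases κ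
      simp at hcase; linarith
    set M := 2 * κ + 1 with hM
    have hxM : x < (M : ℝ) + 1 := by push_cast [hM]; linarith
    have htail : Real.exp x - taylorExp (2 * κ) x
        ≤ x ^ M / M.factorial * ((M + 1) / (M + 1 - x)) := by
      have := exp_tail_le hx M hxM
      have heq : taylorExp (2 * κ) x = ∑ n ∈ Finset.range M, x ^ n / n.factorial := by
        rw [taylorExp, hM]
      rw [heq]; exact this
    -- suffices (κ - x/2) * tailbound ≤ x^(2κ+1)/(2κ)!
    have hkx : 0 < (κ : ℝ) - x / 2 := by linarith
    have key2 : ((κ : ℝ) - x / 2) * (x ^ M / M.factorial * ((M + 1) / (M + 1 - x)))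
        ≤ x ^ (2 * κ + 1) / (2 * κ).factorial := by
      have hMfac : (M.factorial : ℝ) = (2 * κ + 1) * (2 * κ).factorial := by
        rw [hM, Nat.factorial_succ]; push_cast; ring
      have hMc : (M : ℝ) = 2 * κ + 1 := by push_cast [hM]; ring
      have hden : (0 : ℝ) < (M : ℝ) + 1 - x := by linarith
      have hfacpos : (0 : ℝ) < (2 * κ).factorial := by positivity
      have hfacM : (0 : ℝ) < (M.factorial : ℝ) := by positivity
      have hxM' : x ^ M = x ^ (2 * κ + 1) := by rw [hM]
      have hcore : ((κ : ℝ) - x / 2) * ((M : ℝ) + 1) ≤ (2 * κ + 1) * ((M : ℝ) + 1 - x) := by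
        rw [hMc]
        nlinarith [hcase, hx, sq_nonneg ((κ : ℝ) - 1)]
      have hLHS : ((κ : ℝ) - x / 2) * (x ^ M / M.factorial * ((M + 1) / (M + 1 - x)))
          = (((κ : ℝ) - x / 2) * ((M : ℝ) + 1) * x ^ (2 * κ + 1))
            / ((M.factorial : ℝ) * ((M : ℝ) + 1 - x)) := by
        rw [hxM']; field_simp
      rw [hLHS, div_le_div_iff₀ (by positivity) hfacpos]
      calc (((κ : ℝ) - x / 2) * ((M : ℝ) + 1) * x ^ (2 * κ + 1)) * ↑(2 * κ).factorial
          = (((κ : ℝ) - x / 2) * ((M : ℝ) + 1)) * (x ^ (2 * κ + 1) * ↑(2 * κ).factorial) := by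
            ring
        _ ≤ ((2 * κ + 1) * ((M : ℝ) + 1 - x)) * (x ^ (2 * κ + 1) * ↑(2 * κ).factorial) :=
            mul_le_mul_of_nonneg_right hcore (by positivity)
        _ = x ^ (2 * κ + 1) * (↑M.factorial * ((M : ℝ) + 1 - x)) := by rw [hMfac]; ring
    nlinarith [mul_le_mul_of_nonneg_left htail hkx.le]

noncomputable def whitF (κ : ℕ) (x : ℝ) : ℝ :=
  (Real.exp (x / 2) - Real.exp (-(x / 2)) * taylorExp (2 * κ) x) / x ^ κ

noncomputable def whitG' (κ : ℕ) (x : ℝ) : ℝ :=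
  Real.exp (x / 2) * (1 / 2) -
    (Real.exp (-(x / 2)) * (-(1 / 2)) * taylorExp (2 * κ) x +
      Real.exp (-(x / 2)) * (taylorExp (2 * κ) x - x ^ (2 * κ) / (2 * κ).factorial))

lemma hasDerivAt_whitF (κ : ℕ) {x : ℝ} (hx : x ≠ 0) :
    HasDerivAt (whitF κ)
      ((whitG' κ x * x ^ κ -
        (Real.exp (x / 2) - Real.exp (-(x / 2)) * taylorExp (2 * κ) x) * (κ * x ^ (κ - 1))) /
        (x ^ κ) ^ 2) x := by
  have h1 : HasDerivAt (fun x : ℝ => Real.exp (x / 2)) (Real.exp (x / 2) * (1 / 2)) x := by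
    have := (((hasDerivAt_id x).div_const 2)).exp
    simpa using this
  have h2 : HasDerivAt (fun x : ℝ => Real.exp (-(x / 2)))
      (Real.exp (-(x / 2)) * (-(1 / 2))) x := by
    have := (((hasDerivAt_id x).div_const 2)).neg.exp
    simpa using this
  have h3 := h2.mul (hasDerivAt_taylorExp (2 * κ) x)
  have h4 := h1.sub h3
  have h5 := hasDerivAt_pow κ x
  exact h4.div h5 (pow_ne_zero κ hx)

lemma deriv_nonneg (κ : ℕ) {x : ℝ} (hx : 0 < x) :
    0 ≤ (whitG' κ x * x ^ κ -
        (Real.exp (x / 2) - Real.exp (-(x / 2)) * taylorExp (2 * κ) x) * (κ * x ^ (κ - 1))) /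
        (x ^ κ) ^ 2 := by
  apply div_nonneg _ (by positivity)
  set N := whitG' κ x * x ^ κ -
      (Real.exp (x / 2) - Real.exp (-(x / 2)) * taylorExp (2 * κ) x) * (κ * x ^ (κ - 1)) with hN
  have hx1 : x * ((κ : ℝ) * x ^ (κ - 1)) = κ * x ^ κ := by
    cases κ with
    | zero => simp
    | succ k => push_cast [Nat.add_sub_cancel, pow_succ]; ring
  have hEF : Real.exp (x / 2) = Real.exp (-(x / 2)) * Real.exp x := by
    rw [← Real.exp_add]; ring_nf
  have h6 : x * N = x ^ κ *
      (Real.exp (-(x / 2)) * ((x / 2 - κ) * (Real.exp x - taylorExp (2 * κ) x)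
        + x ^ (2 * κ + 1) / (2 * κ).factorial)) := by
    rw [hN, whitG']
    rw [show ∀ g' g : ℝ, x * (g' * x ^ κ - g * ((κ : ℝ) * x ^ (κ - 1)))
        = x * g' * x ^ κ - g * (x * ((κ : ℝ) * x ^ (κ - 1))) from fun _ _ => by ring, hx1, hEF]
    ring
  have h7 : 0 ≤ x * N := by
    rw [h6]
    have := key_ineq κ hx
    positivity
  exact nonneg_of_mul_nonneg_right h7 hx

/-- For every natural number `κ`, the function
`x ↦ (e^{x/2} − e^{−x/2}·e_{2κ}(x)) / x^κ` is monotonically increasing on `(0, ∞)`. -/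
theorem whittaker_M_monotoneOn (κ : ℕ) :
    MonotoneOn
      (fun x : ℝ => (Real.exp (x / 2) - Real.exp (-(x / 2)) * taylorExp (2 * κ) x) / x ^ κ)
      (Set.Ioi (0 : ℝ)) := by
  have hfun : (fun x : ℝ => (Real.exp (x / 2) - Real.exp (-(x / 2)) * taylorExp (2 * κ) x) / x ^ κ)
      = whitF κ := rfl
  rw [hfun]
  apply monotoneOn_of_deriv_nonneg (convex_Ioi 0)
  · intro x hx
    exact ((hasDerivAt_whitF κ (ne_of_gt hx)).differentiableAt).continuousAt.continuousWithinAt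
  · rw [interior_Ioi]
    intro x hx
    exact ((hasDerivAt_whitF κ (ne_of_gt hx)).differentiableAt).differentiableWithinAt
  · rw [interior_Ioi]
    intro x hx
    rw [(hasDerivAt_whitF κ (ne_of_gt hx)).deriv]
    exact deriv_nonneg κ hx
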